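/- Kraus condition for the quantum case: if matrices K₁,…,Kₙ and L₁,…,Lₘ satisfy Σᵢ Kᵢ† Kᵢ ≤ I, Σⱼ Lⱼ† Lⱼ ≤ I, and complex amplitudes νᵢ, μⱼ satisfy Σᵢ |νᵢ|² ≤ 1 and Σⱼ |μⱼ|² ≤ 1, then the operators M_{ij} := |0⟩⟨0| ⊗ (μⱼ Kᵢ) + |1⟩⟨1| ⊗ (νᵢ Lⱼ) satisfy Σ_{i,j} M_{ij}† M_{ij} ≤ I. -/

import Mathlib

open Matrix Kronecker ComplexOrder

noncomputable def E00 : Matrix (Fin 2) (Fin 2) ℂ := Matrix.single 0 0 1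
noncomputable def E11 : Matrix (Fin 2) (Fin 2) ℂ := Matrix.single 1 1 1

open scoped MatrixOrder in
lemma Matrix.posSemidef_iff_eq_transpose_mul_self {a : ℕ} {A : Matrix (Fin a) (Fin a) ℂ} :
    A.PosSemidef ↔ ∃ B : Matrix (Fin a) (Fin a) ℂ, A = Bᴴ * B := by
  refine ⟨fun hA => ?_, ?_⟩
  · obtain ⟨B, rfl⟩ := CStarAlgebra.nonneg_iff_eq_star_mul_self.mp hA.nonneg
    exact ⟨B, rfl⟩
  · rintro ⟨B, rfl⟩; exact Matrix.posSemidef_conjTranspose_mul_self _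

lemma conjTranspose_kron {a b c d : ℕ} (A : Matrix (Fin a) (Fin b) ℂ)
    (B : Matrix (Fin c) (Fin d) ℂ) : (A ⊗ₖ B)ᴴ = Aᴴ ⊗ₖ Bᴴ := by
  ext ⟨i, j⟩ ⟨k, l⟩
  simp [Matrix.conjTranspose_apply, Matrix.kroneckerMap_apply, star_mul']

lemma kron_posSemidef {a b : ℕ} {A : Matrix (Fin a) (Fin a) ℂ}
    {B : Matrix (Fin b) (Fin b) ℂ} (hA : A.PosSemidef) (hB : B.PosSemidef) :
    (A ⊗ₖ B).PosSemidef := by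
  obtain ⟨C, rfl⟩ := Matrix.posSemidef_iff_eq_transpose_mul_self.mp hA
  obtain ⟨D, rfl⟩ := Matrix.posSemidef_iff_eq_transpose_mul_self.mp hB
  rw [Matrix.mul_kronecker_mul, ← conjTranspose_kron]
  exact Matrix.posSemidef_conjTranspose_mul_self _

lemma kron_sum_right {a b c : ℕ} {ι : Type*} (s : Finset ι)
    (A : Matrix (Fin a) (Fin a) ℂ) (f : ι → Matrix (Fin b) (Fin c) ℂ) :
    A ⊗ₖ (∑ x ∈ s, f x) = ∑ x ∈ s, A ⊗ₖ f x := by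
  ext ⟨i, j⟩ ⟨k, l⟩
  simp [Matrix.kroneckerMap_apply, Matrix.sum_apply, Finset.mul_sum]

lemma kron_sub_right {a b c : ℕ} (A : Matrix (Fin a) (Fin a) ℂ)
    (B C : Matrix (Fin b) (Fin c) ℂ) :
    A ⊗ₖ (B - C) = A ⊗ₖ B - A ⊗ₖ C := by
  ext ⟨i, j⟩ ⟨k, l⟩
  simp [Matrix.kroneckerMap_apply, mul_sub]

lemma nonneg_smul_posSemidef {a : ℕ} {A : Matrix (Fin a) (Fin a) ℂ}
    (hA : A.PosSemidef) {r : ℝ} (hr : 0 ≤ r) : ((r : ℂ) • A).PosSemidef := by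
  obtain ⟨C, rfl⟩ := Matrix.posSemidef_iff_eq_transpose_mul_self.mp hA
  have : (r : ℂ) • (Cᴴ * C) = ((Real.sqrt r : ℂ) • C)ᴴ * ((Real.sqrt r : ℂ) • C) := by
    rw [Matrix.conjTranspose_smul, Matrix.smul_mul, Matrix.mul_smul, smul_smul]
    congr 1
    rw [Complex.star_def, Complex.conj_ofReal, ← Complex.ofReal_mul,
      Real.mul_self_sqrt hr]
  rw [this]
  exact Matrix.posSemidef_conjTranspose_mul_self _

lemma psd_sum {k a : ℕ} (f : Fin k → Matrix (Fin a) (Fin a) ℂ)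
    (h : ∀ i, (f i).PosSemidef) : (∑ i, f i).PosSemidef :=
  Finset.sum_induction f _ (fun _ _ => Matrix.PosSemidef.add)
    Matrix.PosSemidef.zero (fun i _ => h i)

lemma E00_psd : E00.PosSemidef := by
  have h : E00 = E00ᴴ * E00 := by
    ext i j
    fin_cases i <;> fin_cases j <;>
      simp [E00, Matrix.mul_apply, Fin.sum_univ_two, Matrix.single_apply_same,
        Matrix.single]
  rw [h]; exact Matrix.posSemidef_conjTranspose_mul_self _

lemma E11_psd : E11.PosSemidef := by
  have h : E11 = E11ᴴ * E11 := by
    ext i j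
    fin_cases i <;> fin_cases j <;>
      simp [E11, Matrix.mul_apply, Fin.sum_univ_two, Matrix.single]
  rw [h]; exact Matrix.posSemidef_conjTranspose_mul_self _

lemma E00_mul_E11 : E00 * E11 = 0 := by
  ext i j
  fin_cases i <;> fin_cases j <;>
    simp [E00, E11, Matrix.mul_apply, Fin.sum_univ_two, Matrix.single]

lemma E11_mul_E00 : E11 * E00 = 0 := by
  ext i j
  fin_cases i <;> fin_cases j <;>
    simp [E00, E11, Matrix.mul_apply, Fin.sum_univ_two, Matrix.single]

lemma E00_mul_E00 : E00 * E00 = E00 := by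
  ext i j
  fin_cases i <;> fin_cases j <;>
    simp [E00, Matrix.mul_apply, Fin.sum_univ_two, Matrix.single]

lemma E11_mul_E11 : E11 * E11 = E11 := by
  ext i j
  fin_cases i <;> fin_cases j <;>
    simp [E11, Matrix.mul_apply, Fin.sum_univ_two, Matrix.single]

lemma E00_herm : E00ᴴ = E00 := by
  ext i j
  fin_cases i <;> fin_cases j <;> simp [E00, Matrix.single]

lemma E11_herm : E11ᴴ = E11 := by
  ext i j
  fin_cases i <;> fin_cases j <;> simp [E11, Matrix.single]

lemma E00_add_E11 : E00 + E11 = 1 := by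
  ext i j
  fin_cases i <;> fin_cases j <;>
    simp [E00, E11, Matrix.one_apply, Matrix.single]

/-- Kraus condition for the quantum case: the operators
`M_{ij} = |0⟩⟨0| ⊗ (μⱼ Kᵢ) + |1⟩⟨1| ⊗ (νᵢ Lⱼ)` satisfy `Σ_{i,j} M_{ij}† M_{ij} ≤ I`. -/
theorem qcase_kraus_condition {d e n m : ℕ}
    (K : Fin n → Matrix (Fin e) (Fin d) ℂ) (L : Fin m → Matrix (Fin e) (Fin d) ℂ)
    (ν : Fin n → ℂ) (μ : Fin m → ℂ)
    (hK : ((1 : Matrix (Fin d) (Fin d) ℂ) - ∑ i, (K i)ᴴ * K i).PosSemidef)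
    (hL : ((1 : Matrix (Fin d) (Fin d) ℂ) - ∑ j, (L j)ᴴ * L j).PosSemidef)
    (hν : ∑ i, ‖ν i‖ ^ 2 ≤ 1) (hμ : ∑ j, ‖μ j‖ ^ 2 ≤ 1) :
    ((1 : Matrix (Fin 2 × Fin d) (Fin 2 × Fin d) ℂ) -
      ∑ i, ∑ j,
        (E00 ⊗ₖ (μ j • K i) + E11 ⊗ₖ (ν i • L j))ᴴ *
          (E00 ⊗ₖ (μ j • K i) + E11 ⊗ₖ (ν i • L j))).PosSemidef := by
  set S : Matrix (Fin d) (Fin d) ℂ := ∑ i, (K i)ᴴ * K i with hS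
  set T : Matrix (Fin d) (Fin d) ℂ := ∑ j, (L j)ᴴ * L j with hT
  set c : ℝ := ∑ j, ‖μ j‖ ^ 2 with hc
  set b : ℝ := ∑ i, ‖ν i‖ ^ 2 with hb
  have hc0 : 0 ≤ c := Finset.sum_nonneg fun _ _ => by positivity
  have hb0 : 0 ≤ b := Finset.sum_nonneg fun _ _ => by positivity
  -- per-term computation
  have hterm : ∀ (i : Fin n) (j : Fin m),
      (E00 ⊗ₖ (μ j • K i) + E11 ⊗ₖ (ν i • L j))ᴴ *
        (E00 ⊗ₖ (μ j • K i) + E11 ⊗ₖ (ν i • L j)) =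
      E00 ⊗ₖ (((‖μ j‖ ^ 2 : ℝ) : ℂ) • ((K i)ᴴ * K i)) +
      E11 ⊗ₖ (((‖ν i‖ ^ 2 : ℝ) : ℂ) • ((L j)ᴴ * L j)) := by
    intro i j
    rw [Matrix.conjTranspose_add, conjTranspose_kron, conjTranspose_kron,
      E00_herm, E11_herm, Matrix.add_mul, Matrix.mul_add, Matrix.mul_add,
      ← Matrix.mul_kronecker_mul, ← Matrix.mul_kronecker_mul,
      ← Matrix.mul_kronecker_mul, ← Matrix.mul_kronecker_mul,
      E00_mul_E00, E00_mul_E11, E11_mul_E00, E11_mul_E11,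
      Matrix.zero_kronecker, Matrix.zero_kronecker]
    have h1 : (μ j • K i)ᴴ * (μ j • K i) =
        ((‖μ j‖ ^ 2 : ℝ) : ℂ) • ((K i)ᴴ * K i) := by
      rw [Matrix.conjTranspose_smul, Matrix.smul_mul, Matrix.mul_smul, smul_smul]
      congr 1
      rw [Complex.star_def, ← Complex.normSq_eq_conj_mul_self]
      simp [Complex.normSq_eq_norm_sq]
    have h2 : (ν i • L j)ᴴ * (ν i • L j) =
        ((‖ν i‖ ^ 2 : ℝ) : ℂ) • ((L j)ᴴ * L j) := by
      rw [Matrix.conjTranspose_smul, Matrix.smul_mul, Matrix.mul_smul, smul_smul]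
      congr 1
      rw [Complex.star_def, ← Complex.normSq_eq_conj_mul_self]
      simp [Complex.normSq_eq_norm_sq]
    rw [h1, h2]
    abel
  have hsum : ∑ i, ∑ j,
      (E00 ⊗ₖ (μ j • K i) + E11 ⊗ₖ (ν i • L j))ᴴ *
        (E00 ⊗ₖ (μ j • K i) + E11 ⊗ₖ (ν i • L j)) =
      E00 ⊗ₖ ((c : ℂ) • S) + E11 ⊗ₖ ((b : ℂ) • T) := by
    have hKsum : ∑ i, ∑ j, (((‖μ j‖ ^ 2 : ℝ) : ℂ)) • ((K i)ᴴ * K i) = (c : ℂ) • S := by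
      rw [hS, Finset.smul_sum]
      refine Finset.sum_congr rfl fun i _ => ?_
      rw [← Finset.sum_smul, hc]
      norm_cast
    have hLsum : ∑ i, ∑ j, (((‖ν i‖ ^ 2 : ℝ) : ℂ)) • ((L j)ᴴ * L j) = (b : ℂ) • T := by
      rw [Finset.sum_comm, hT, Finset.smul_sum]
      refine Finset.sum_congr rfl fun j _ => ?_
      rw [← Finset.sum_smul, hb]
      norm_cast
    simp_rw [hterm, Finset.sum_add_distrib, ← kron_sum_right]
    rw [hKsum, hLsum]
  rw [hsum]
  have hone : (1 : Matrix (Fin 2 × Fin d) (Fin 2 × Fin d) ℂ) = E00 ⊗ₖ 1 + E11 ⊗ₖ 1 := by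
    rw [← Matrix.add_kronecker, E00_add_E11, Matrix.one_kronecker_one]
  have key : (1 : Matrix (Fin 2 × Fin d) (Fin 2 × Fin d) ℂ) -
      (E00 ⊗ₖ ((c : ℂ) • S) + E11 ⊗ₖ ((b : ℂ) • T)) =
      E00 ⊗ₖ ((1 : Matrix (Fin d) (Fin d) ℂ) - (c : ℂ) • S) +
      E11 ⊗ₖ ((1 : Matrix (Fin d) (Fin d) ℂ) - (b : ℂ) • T) := by
    rw [kron_sub_right, kron_sub_right, hone]
    abel
  rw [key]
  have hPS : ((1 : Matrix (Fin d) (Fin d) ℂ) - (c : ℂ) • S).PosSemidef := by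
    have hSpsd : S.PosSemidef := by
      rw [hS]
      exact psd_sum _ fun i => Matrix.posSemidef_conjTranspose_mul_self _
    have : (1 : Matrix (Fin d) (Fin d) ℂ) - (c : ℂ) • S =
        ((1 : Matrix (Fin d) (Fin d) ℂ) - S) + (((1 - c : ℝ) : ℂ) • S) := by
      push_cast
      rw [sub_smul, one_smul]
      abel
    rw [this]
    exact hK.add (nonneg_smul_posSemidef hSpsd (by linarith))
  have hQT : ((1 : Matrix (Fin d) (Fin d) ℂ) - (b : ℂ) • T).PosSemidef := by
    have hTpsd : T.PosSemidef := by
      rw [hT]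
      exact psd_sum _ fun j => Matrix.posSemidef_conjTranspose_mul_self _
    have : (1 : Matrix (Fin d) (Fin d) ℂ) - (b : ℂ) • T =
        ((1 : Matrix (Fin d) (Fin d) ℂ) - T) + (((1 - b : ℝ) : ℂ) • T) := by
      push_cast
      rw [sub_smul, one_smul]
      abel
    rw [this]
    exact hL.add (nonneg_smul_posSemidef hTpsd (by linarith))
  exact (kron_posSemidef E00_psd hPS).add (kron_posSemidef E11_psd hQT)
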